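/- Let p be a prime and let v_1, ..., v_{3p-2} ∈ ℤ_p² be primitive vectors all lying in the same projective class modulo p. Then there exist distinct indices i_1, ..., i_t with 1 ≤ t ≤ p such that both coordinates of v_{i_1} + ... + v_{i_t} are divisible by p, but at least one coordinate is not divisible by p². -/

import Mathlib

set_option linter.unusedSectionVars false
set_option linter.unusedVariables false


open Finset

variable {p : ℕ} [Fact p.Prime]

/-- The reduction map `ZMod p² → ZMod p`. -/
def castp (p : ℕ) [Fact p.Prime] : ZMod (p^2) →+* ZMod p :=
  ZMod.castHom (dvd_pow_self p (by omega)) (ZMod p)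

lemma pmul_ne_zero (u : ZMod (p^2)) (hu : castp p u ≠ 0) :
    (p : ZMod (p^2)) * u ≠ 0 := by
  have hp := (Fact.out : p.Prime).two_le
  intro h
  apply hu
  have hval : ((u.val : ℕ) : ZMod (p^2)) = u := by
    rw [ZMod.natCast_val, ZMod.cast_id]
  have h2 : ((p * u.val : ℕ) : ZMod (p^2)) = 0 := by push_cast; rw [hval]; exact h
  rw [ZMod.natCast_eq_zero_iff] at h2
  obtain ⟨c, hc⟩ := h2
  have hdvd : p ∣ u.val := by
    refine ⟨c, ?_⟩
    have : p * u.val = p * (p * c) := by rw [hc]; ring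
    exact Nat.eq_of_mul_eq_mul_left (by omega) this
  rw [← hval, map_natCast, ZMod.natCast_eq_zero_iff]
  exact hdvd

section Core

variable {ι : Type*} [DecidableEq ι] (ξ : ι → ZMod p)

lemma sums_grow [Fintype (ZMod p)] (hξ : ∀ i, ξ i ≠ 0) (Q : Finset ι) :
    min p (Q.card + 1) ≤ (Q.powerset.image (fun T => ∑ i ∈ T, ξ i)).card := by
  classical
  induction Q using Finset.induction_on with
  | empty =>
      have := (Fact.out : p.Prime).two_le
      simp only [powerset_empty, image_singleton, card_singleton, card_empty]
      omega
  | @insert a Q ha IH =>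
      set SQ := Q.powerset.image (fun T => ∑ i ∈ T, ξ i) with hSQ
      set SQ' := (insert a Q).powerset.image (fun T => ∑ i ∈ T, ξ i) with hSQ'
      have hsub : SQ ⊆ SQ' :=
        image_subset_image (powerset_mono.mpr (subset_insert a Q))
      by_cases hbig : p ≤ SQ.card
      · have : p ≤ SQ'.card := le_trans hbig (card_le_card hsub)
        omega
      · push_neg at hbig
        have h0 : (0 : ZMod p) ∈ SQ :=
          mem_image.mpr ⟨∅, mem_powerset.mpr (empty_subset _), sum_empty⟩
        have hex : ∃ x ∈ SQ, x + ξ a ∉ SQ := by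
          by_contra hcl
          push_neg at hcl
          have key : ∀ n : ℕ, ∀ x ∈ SQ, x + n • ξ a ∈ SQ := by
            intro n
            induction n with
            | zero => intro x hx; simpa using hx
            | succ n ihn =>
                intro x hx
                have := hcl _ (ihn x hx)
                rwa [succ_nsmul, ← add_assoc]
          have hall : ∀ y : ZMod p, y ∈ SQ := by
            intro y
            have := key (y * (ξ a)⁻¹).val 0 h0
            rwa [zero_add, nsmul_eq_mul, ZMod.natCast_val, ZMod.cast_id,
              inv_mul_cancel_right₀ (hξ a)] at this
          have : SQ = univ := eq_univ_of_forall hall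
          rw [this, card_univ, ZMod.card] at hbig
          omega
        obtain ⟨x, hxmem, hxnot⟩ := hex
        have hxin : x + ξ a ∈ SQ' := by
          obtain ⟨T, hT, rfl⟩ := mem_image.mp hxmem
          refine mem_image.mpr ⟨insert a T, ?_, ?_⟩
          · exact mem_powerset.mpr (insert_subset_insert a (mem_powerset.mp hT))
          · rw [sum_insert (fun h => ha (mem_powerset.mp hT h)), add_comm]
        have hcard : SQ.card + 1 ≤ SQ'.card := by
          rw [← card_insert_of_notMem hxnot]
          exact card_le_card (insert_subset hxin hsub)
        rw [card_insert_of_notMem ha]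
        omega

lemma cover (hξ : ∀ i, ξ i ≠ 0) (Q : Finset ι) (hQ : Q.card = p - 1) (s : ZMod p) :
    ∃ T ⊆ Q, ∑ i ∈ T, ξ i = s := by
  have hp := (Fact.out : p.Prime).two_le
  have h := sums_grow ξ hξ Q
  rw [hQ] at h
  have hmin : min p (p - 1 + 1) = p := by omega
  rw [hmin] at h
  have hle : (Q.powerset.image (fun T => ∑ i ∈ T, ξ i)).card ≤ p :=
    le_trans (card_le_univ _) (ZMod.card p).le
  have huniv : Q.powerset.image (fun T => ∑ i ∈ T, ξ i) = univ :=
    eq_univ_of_card _ (by rw [le_antisymm hle h, ZMod.card])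
  have hs : s ∈ Q.powerset.image (fun T => ∑ i ∈ T, ξ i) := by rw [huniv]; exact mem_univ s
  obtain ⟨T, hT, hsum⟩ := mem_image.mp hs
  exact ⟨T, mem_powerset.mp hT, hsum⟩

lemma extract [LinearOrder ι] (S : Finset ι) (hS : p ≤ S.card) :
    ∃ T ⊆ S, T.Nonempty ∧ T.card ≤ p ∧ ∑ i ∈ T, ξ i = 0 := by
  obtain ⟨S', hS'sub, hS'card⟩ := Finset.exists_subset_card_eq hS
  set e := S'.orderIsoOfFin hS'card with he
  set f : Fin (p + 1) → ZMod p :=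
    fun k => ∑ i ∈ univ.filter (fun i : Fin p => (i : ℕ) < (k : ℕ)), ξ (e i) with hf
  have hcard : Fintype.card (ZMod p) < Fintype.card (Fin (p + 1)) := by
    rw [ZMod.card, Fintype.card_fin]; omega
  obtain ⟨k, l, hlt, hfe⟩ : ∃ k l : Fin (p + 1), (k : ℕ) < (l : ℕ) ∧ f k = f l := by
    obtain ⟨k, l, hkl, hfe⟩ := Fintype.exists_ne_map_eq_of_card_lt f hcard
    rcases lt_or_gt_of_ne (Fin.val_ne_of_ne hkl) with h | h
    · exact ⟨k, l, h, hfe⟩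
    · exact ⟨l, k, h, hfe.symm⟩
  set M : Finset (Fin p) :=
    univ.filter (fun i : Fin p => (k : ℕ) ≤ (i : ℕ) ∧ (i : ℕ) < (l : ℕ)) with hM
  have hsumM : ∑ i ∈ M, ξ (e i) = 0 := by
    have hsplit :
        ∑ i ∈ univ.filter (fun i : Fin p => (i : ℕ) < (l : ℕ)), ξ (e i)
          = ∑ i ∈ univ.filter (fun i : Fin p => (i : ℕ) < (k : ℕ)), ξ (e i)
            + ∑ i ∈ M, ξ (e i) := by
      rw [← Finset.sum_filter_add_sum_filter_not
        (univ.filter (fun i : Fin p => (i : ℕ) < (l : ℕ))) (fun i => (i : ℕ) < (k : ℕ))]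
      congr 1
      · congr 1
        ext i
        simp only [mem_filter, mem_univ, true_and]
        omega
      · congr 1
        ext i
        simp only [hM, mem_filter, mem_univ, true_and]
        omega
    have h2 : f l = f k + ∑ i ∈ M, ξ (e i) := hsplit
    rw [← hfe] at h2
    exact (left_eq_add.mp h2)
  have hkp : (k : ℕ) < p := by have := l.isLt; omega
  refine ⟨M.image (fun i => (e i : ι)), ?_, ?_, ?_, ?_⟩
  · intro x hx
    obtain ⟨i, _, rfl⟩ := mem_image.mp hx
    exact hS'sub (e i).2
  · refine ⟨e ⟨(k : ℕ), hkp⟩, mem_image.mpr ⟨⟨(k : ℕ), hkp⟩, ?_, rfl⟩⟩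
    simp only [hM, mem_filter, mem_univ, true_and]
    omega
  · calc (M.image (fun i => (e i : ι))).card ≤ M.card := card_image_le
      _ ≤ (univ : Finset (Fin p)).card := card_filter_le _ _
      _ = p := by rw [card_univ, Fintype.card_fin]
  · rw [Finset.sum_image]
    · exact hsumM
    · intro i _ j _ hij
      exact e.injective (Subtype.coe_injective hij)

end Core

section Core2
variable {ι : Type*} [DecidableEq ι] [LinearOrder ι] (ξ : ι → ZMod p)


lemma sum_eq_zero_of_zerosum {R : Type*} [AddCommGroup R] (B : ι → R)
    (FH : ∀ S : Finset ι, S.Nonempty → S.card ≤ p → ∑ i ∈ S, ξ i = 0 → ∑ i ∈ S, B i = 0) :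
    ∀ S : Finset ι, ∑ i ∈ S, ξ i = 0 → ∑ i ∈ S, B i = 0 := by
  intro S
  induction S using Finset.strongInductionOn with
  | _ S IH =>
    intro hS0
    by_cases hle : S.card ≤ p
    · rcases S.eq_empty_or_nonempty with rfl | hne
      · simp
      · exact FH S hne hle hS0
    · push_neg at hle
      obtain ⟨T, hTS, hTne, hTcard, hTsum⟩ := extract ξ S (by omega)
      have h1 : ∑ i ∈ T, B i = 0 := FH T hTne hTcard hTsum
      have hξsd : ∑ i ∈ S \ T, ξ i = 0 := by
        have hsd := Finset.sum_sdiff hTS (f := ξ)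
        rw [hTsum, add_zero] at hsd
        rw [hsd]; exact hS0
      have h2 : ∑ i ∈ S \ T, B i = 0 := IH _ (Finset.sdiff_ssubset hTS hTne) hξsd
      have hsdB := Finset.sum_sdiff hTS (f := B)
      rw [h1, add_zero, h2] at hsdB
      exact hsdB.symm

lemma cover2 (hξ : ∀ i, ξ i ≠ 0) (Q : Finset ι) (hQ : p ≤ Q.card)
    (h2 : ∃ x ∈ Q, ∃ y ∈ Q, ξ x ≠ ξ y) (s : ZMod p) :
    ∃ T, T ⊆ Q ∧ T.card ≤ p - 2 ∧ ∑ i ∈ T, ξ i = s := by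
  have hp := (Fact.out : p.Prime).two_le
  by_contra hcon
  push_neg at hcon
  have hall : ∀ Q₀ ⊆ Q, Q₀.card = p - 1 → ∑ i ∈ Q₀, ξ i = s := by
    intro Q₀ hsub hcard
    obtain ⟨T, hTsub, hTsum⟩ := cover ξ hξ Q₀ hcard s
    have hTble : T.card ≤ p - 1 := hcard ▸ card_le_card hTsub
    have hTbig : ¬ T.card ≤ p - 2 := fun h => hcon T (hTsub.trans hsub) h hTsum
    rw [Finset.eq_of_subset_of_card_le hTsub (by omega)] at hTsum
    exact hTsum
  obtain ⟨x, hx, y, hy, hxy⟩ := h2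
  have hne : x ≠ y := fun h => hxy (by rw [h])
  have hpair : ({x, y} : Finset ι) ⊆ Q := by
    intro z hz
    rcases mem_insert.mp hz with rfl | hz
    · exact hx
    · rw [mem_singleton.mp hz]; exact hy
  have hRcard : p - 2 ≤ (Q \ {x, y}).card := by
    rw [card_sdiff_of_subset hpair, card_pair hne]; omega
  obtain ⟨R', hR'sub, hR'card⟩ := Finset.exists_subset_card_eq hRcard
  have hxR : x ∉ R' := fun h => by
    have := hR'sub h
    rw [mem_sdiff] at this
    exact this.2 (mem_insert_self x {y})
  have hyR : y ∉ R' := fun h => by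
    have := hR'sub h
    rw [mem_sdiff] at this
    exact this.2 (mem_insert_of_mem (mem_singleton_self y))
  have hR'Q : R' ⊆ Q := hR'sub.trans (sdiff_subset)
  have e1 : ∑ i ∈ insert x R', ξ i = s :=
    hall _ (insert_subset hx hR'Q) (by rw [card_insert_of_notMem hxR, hR'card]; omega)
  have e2 : ∑ i ∈ insert y R', ξ i = s :=
    hall _ (insert_subset hy hR'Q) (by rw [card_insert_of_notMem hyR, hR'card]; omega)
  rw [sum_insert hxR] at e1
  rw [sum_insert hyR] at e2
  exact hxy (by rw [← add_right_cancel (e1.trans e2.symm)])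

end Core2

section Star
variable {N : ℕ}

variable {N : ℕ}

/-- well-definedness / swap lemma -/
lemma wd (hN : N = 3 * p - 2) (B : Fin N → ZMod (p^2)) (ξ : Fin N → ZMod p)
    (hξ : ∀ i, ξ i ≠ 0)
    (L1 : ∀ S : Finset (Fin N), ∑ i ∈ S, ξ i = 0 → ∑ i ∈ S, B i = 0)
    (hTwo : ∀ Q : Finset (Fin N), p ≤ Q.card → ∃ x ∈ Q, ∃ y ∈ Q, ξ x ≠ ξ y)
    (K K' : Finset (Fin N)) (hK : K.card ≤ p - 1) (hK' : K'.card ≤ p - 1)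
    (hsum : ∑ i ∈ K, ξ i = ∑ i ∈ K', ξ i) :
    ∑ i ∈ K, B i = ∑ i ∈ K', B i := by
  have hp := (Fact.out : p.Prime).two_le
  set pool := (univ : Finset (Fin N)) \ (K ∪ K') with hpool
  have hpoolcard : p ≤ pool.card := by
    have h1 : (K ∪ K').card ≤ (p - 1) + (p - 1) :=
      le_trans (card_union_le _ _) (by omega)
    have h2 : pool.card = N - (K ∪ K').card := by
      rw [hpool, card_sdiff_of_subset (subset_univ _), card_univ, Fintype.card_fin]
    omega
  obtain ⟨T, hTsub, hTcard, hTsum⟩ :=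
    cover2 ξ hξ pool hpoolcard (hTwo pool hpoolcard) (- ∑ i ∈ K, ξ i)
  have hdisj : ∀ W : Finset (Fin N), W ⊆ K ∪ K' → Disjoint W T := by
    intro W hW
    rw [disjoint_left]
    intro i hiW hiT
    have := hTsub hiT
    rw [hpool, mem_sdiff] at this
    exact this.2 (hW hiW)
  have h1 : ∑ i ∈ K ∪ T, B i = 0 := by
    apply L1
    rw [sum_union (hdisj K subset_union_left), hTsum, add_neg_cancel]
  have h2 : ∑ i ∈ K' ∪ T, B i = 0 := by
    apply L1
    rw [sum_union (hdisj K' subset_union_right), hTsum, ← hsum, add_neg_cancel]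
  rw [sum_union (hdisj K subset_union_left)] at h1
  rw [sum_union (hdisj K' subset_union_right)] at h2
  have := h1.trans h2.symm
  exact add_right_cancel this

lemma star (hN : N = 3 * p - 2) (B : Fin N → ZMod (p^2))
    (hB : ∀ i, castp p (B i) ≠ 0) :
    ∃ S : Finset (Fin N), S.Nonempty ∧ S.card ≤ p ∧
      castp p (∑ i ∈ S, B i) = 0 ∧ ∑ i ∈ S, B i ≠ 0 := by
  have hp := (Fact.out : p.Prime).two_le
  by_contra hcon
  push_neg at hcon
  set ξ : Fin N → ZMod p := fun i => castp p (B i) with hξdef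
  have hξ : ∀ i, ξ i ≠ 0 := hB
  have hcast : ∀ S : Finset (Fin N), castp p (∑ i ∈ S, B i) = ∑ i ∈ S, ξ i := by
    intro S; rw [map_sum]
  have FH : ∀ S : Finset (Fin N), S.Nonempty → S.card ≤ p →
      ∑ i ∈ S, ξ i = 0 → ∑ i ∈ S, B i = 0 := by
    intro S h1 h2 h3
    exact hcon S h1 h2 (by rw [hcast]; exact h3)
  have L1 := sum_eq_zero_of_zerosum ξ B FH
  by_cases hTwo : ∀ Q : Finset (Fin N), p ≤ Q.card → ∃ x ∈ Q, ∃ y ∈ Q, ξ x ≠ ξ y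
  · -- case B : telescope
    have hNpos : 0 < N := by omega
    set i₀ : Fin N := ⟨0, hNpos⟩ with hi₀
    set a := ξ i₀ with ha
    set P := (univ : Finset (Fin N)).erase i₀ with hP
    have hPcard : p ≤ P.card := by
      rw [hP, card_erase_of_mem (mem_univ i₀), card_univ, Fintype.card_fin]
      omega
    have hKex : ∀ j : ℕ, ∃ T, T ⊆ P ∧ T.card ≤ p - 2 ∧ ∑ i ∈ T, ξ i = (j : ZMod p) * a :=
      fun j => cover2 ξ hξ P hPcard (hTwo P hPcard) ((j : ZMod p) * a)
    choose K hKP hKcard hKsum using hKex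
    have hi₀K : ∀ j, i₀ ∉ K j := fun j h => (Finset.notMem_erase i₀ univ) (hKP j h)
    have key : ∀ j : ℕ, 1 ≤ j → j ≤ p - 1 → ∑ i ∈ K j, B i = j • B i₀ := by
      intro j hj1
      induction j, hj1 using Nat.le_induction with
      | base =>
          intro _
          have h := wd hN B ξ hξ L1 hTwo (K 1) {i₀} (by have := hKcard 1; omega)
            (by rw [card_singleton]; omega)
            (by rw [hKsum 1, sum_singleton, Nat.cast_one, one_mul])
          rw [h, sum_singleton, one_nsmul]
      | succ j hj IH =>
          intro hj2
          have hIH := IH (by omega)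
          have h := wd hN B ξ hξ L1 hTwo (K (j + 1)) (insert i₀ (K j))
            (by have := hKcard (j + 1); omega)
            (by rw [card_insert_of_notMem (hi₀K j)]; have := hKcard j; omega)
            (by
              rw [hKsum (j + 1), sum_insert (hi₀K j), hKsum j]
              push_cast
              ring)
          rw [h, sum_insert (hi₀K j), hIH, succ_nsmul, add_comm]
    have hfin : ∑ i ∈ insert i₀ (K (p - 1)), ξ i = 0 := by
      rw [sum_insert (hi₀K (p - 1)), hKsum (p - 1)]
      have hcast1 : ((p - 1 : ℕ) : ZMod p) = -1 := by
        rw [Nat.cast_sub (by omega : 1 ≤ p), ZMod.natCast_self, Nat.cast_one, zero_sub]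
      rw [hcast1]
      ring
    have h0 := L1 _ hfin
    rw [sum_insert (hi₀K (p - 1)), key (p - 1) (by omega) le_rfl] at h0
    have hmul : (p : ZMod (p^2)) * B i₀ = 0 := by
      calc (p : ZMod (p^2)) * B i₀ = p • B i₀ := (nsmul_eq_mul p (B i₀)).symm
        _ = (1 + (p - 1)) • B i₀ := by congr 1; omega
        _ = 1 • B i₀ + (p - 1) • B i₀ := add_nsmul _ _ _
        _ = B i₀ + (p - 1) • B i₀ := by rw [one_nsmul]
        _ = 0 := h0
    exact pmul_ne_zero (B i₀) (hB i₀) hmul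
  · -- case A : a constant block
    push_neg at hTwo
    obtain ⟨Q, hQcard, hQconst⟩ := hTwo
    obtain ⟨Q₁, hQ₁sub, hQ₁card⟩ := Finset.exists_subset_card_eq hQcard
    have hQ₁ne : Q₁.Nonempty := by rw [← card_pos, hQ₁card]; omega
    obtain ⟨i₁, hi₁⟩ := hQ₁ne
    have hconstξ : ∀ j ∈ Q₁, ξ j = ξ i₁ :=
      fun j hj => hQconst j (hQ₁sub hj) i₁ (hQ₁sub hi₁)
    have hconstB : ∀ j ∈ Q₁, B j = B i₁ := by
      intro j hj
      by_cases hij : j = i₁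
      · rw [hij]
      · have hi₁e : i₁ ∈ (univ : Finset (Fin N)).erase j :=
          mem_erase.mpr ⟨fun h => hij h.symm, mem_univ _⟩
        have hpool2 : p - 1 ≤ (((univ : Finset (Fin N)).erase j).erase i₁).card := by
          rw [card_erase_of_mem hi₁e, card_erase_of_mem (mem_univ _), card_univ,
            Fintype.card_fin]
          omega
        obtain ⟨Q₂, hQ₂sub, hQ₂card⟩ := Finset.exists_subset_card_eq hpool2
        obtain ⟨T, hTsub, hTsum⟩ := cover ξ hξ Q₂ hQ₂card (- ξ i₁)
        have hTQ₂ := hTsub.trans hQ₂sub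
        have hjT : j ∉ T := fun h =>
          (Finset.notMem_erase j univ) (Finset.erase_subset _ _ (hTQ₂ h))
        have hi₁T : i₁ ∉ T := fun h => (Finset.notMem_erase i₁ _) (hTQ₂ h)
        have e1 : ∑ i ∈ insert j T, B i = 0 := by
          apply L1
          rw [sum_insert hjT, hTsum, hconstξ j hj, add_neg_cancel]
        have e2 : ∑ i ∈ insert i₁ T, B i = 0 := by
          apply L1
          rw [sum_insert hi₁T, hTsum, add_neg_cancel]
        rw [sum_insert hjT] at e1
        rw [sum_insert hi₁T] at e2
        exact add_right_cancel (e1.trans e2.symm)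
    have hsumξ : ∑ i ∈ Q₁, ξ i = 0 := by
      rw [Finset.sum_congr rfl hconstξ, sum_const, hQ₁card, nsmul_eq_mul,
        ZMod.natCast_self, zero_mul]
    have h0 := L1 Q₁ hsumξ
    rw [Finset.sum_congr rfl hconstB, sum_const, hQ₁card] at h0
    refine pmul_ne_zero (B i₁) (hB i₁) ?_
    rw [← nsmul_eq_mul]
    exact h0
end Star
lemma dvd_iff_toZMod (z : ℤ_[p]) : (p : ℤ_[p]) ∣ z ↔ PadicInt.toZMod z = 0 := by
  rw [← RingHom.mem_ker, PadicInt.ker_toZMod, PadicInt.maximalIdeal_eq_span_p,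
    Ideal.mem_span_singleton]

lemma dvd2_iff_toZModPow (z : ℤ_[p]) :
    (p : ℤ_[p])^2 ∣ z ↔ PadicInt.toZModPow 2 z = 0 := by
  rw [← RingHom.mem_ker, PadicInt.ker_toZModPow, Ideal.mem_span_singleton]

lemma comp_iff (z : ℤ_[p]) :
    castp p (PadicInt.toZModPow 2 z) = 0 ↔ PadicInt.toZMod z = 0 := by
  have hp := (Fact.out : p.Prime).two_le
  rw [← dvd_iff_toZMod]
  constructor
  · intro h
    set u := PadicInt.toZModPow 2 z with hu
    have hval : ((u.val : ℕ) : ZMod (p^2)) = u := by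
      rw [ZMod.natCast_val, ZMod.cast_id]
    have hcast : ((u.val : ℕ) : ZMod p) = 0 := by
      rw [← map_natCast (castp p) u.val, hval]; exact h
    rw [ZMod.natCast_eq_zero_iff] at hcast
    -- p ∣ u.val
    have hker : PadicInt.toZModPow 2 (z - (u.val : ℤ_[p])) = 0 := by
      rw [map_sub, map_natCast, hval, sub_self]
    rw [← dvd2_iff_toZModPow] at hker
    have h1 : (p : ℤ_[p]) ∣ z - (u.val : ℤ_[p]) :=
      dvd_trans (dvd_pow_self (p : ℤ_[p]) (by omega : (2:ℕ) ≠ 0)) hker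
    have h2 : (p : ℤ_[p]) ∣ ((u.val : ℕ) : ℤ_[p]) := by
      obtain ⟨c, hc⟩ := hcast
      refine ⟨(c : ℤ_[p]), ?_⟩
      rw [hc]; push_cast; ring
    have := dvd_add h1 h2
    rwa [sub_add_cancel] at this
  · intro h
    obtain ⟨t, ht⟩ := h
    rw [ht, map_mul, map_mul, map_natCast, map_natCast, ZMod.natCast_self, zero_mul]

lemma padic_helper {N : ℕ} (hN : N = 3 * p - 2)
    (x y : Fin N → ℤ_[p])
    (hx : ∀ i, PadicInt.toZMod (x i) ≠ 0)
    (r : ZMod p) (hr : ∀ i, PadicInt.toZMod (y i) = r * PadicInt.toZMod (x i)) :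
    ∃ S : Finset (Fin N), S.Nonempty ∧ S.card ≤ p ∧
      (p : ℤ_[p]) ∣ (∑ i ∈ S, x i) ∧ (p : ℤ_[p]) ∣ (∑ i ∈ S, y i) ∧
      ¬ ((p : ℤ_[p])^2 ∣ (∑ i ∈ S, x i)) := by
  set B : Fin N → ZMod (p^2) := fun i => PadicInt.toZModPow 2 (x i) with hBdef
  have hB : ∀ i, castp p (B i) ≠ 0 := fun i h => hx i ((comp_iff (x i)).mp h)
  obtain ⟨S, hne, hcard, hcast, hsum⟩ := star hN B hB
  have hsumB : PadicInt.toZModPow 2 (∑ i ∈ S, x i) = ∑ i ∈ S, B i := map_sum _ _ _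
  have hdvdx : (p : ℤ_[p]) ∣ ∑ i ∈ S, x i := by
    rw [dvd_iff_toZMod, ← comp_iff, hsumB]
    exact hcast
  refine ⟨S, hne, hcard, hdvdx, ?_, ?_⟩
  · rw [dvd_iff_toZMod, map_sum]
    have : ∀ i ∈ S, PadicInt.toZMod (y i) = r * PadicInt.toZMod (x i) := fun i _ => hr i
    rw [Finset.sum_congr rfl this, ← Finset.mul_sum, ← map_sum]
    rw [dvd_iff_toZMod] at hdvdx
    rw [hdvdx, mul_zero]
  · intro h
    rw [dvd2_iff_toZModPow, hsumB] at h
    exact hsum h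

theorem stmt_8 (p : ℕ) [Fact p.Prime] (v : Fin (3 * p - 2) → ℤ_[p] × ℤ_[p])
    (hprim : ∀ i, ¬ ((p : ℤ_[p]) ∣ (v i).1 ∧ (p : ℤ_[p]) ∣ (v i).2))
    (hclass : ∃ w : ZMod p × ZMod p, w ≠ 0 ∧
      ∀ i, ∃ c : ZMod p, c ≠ 0 ∧
        (PadicInt.toZMod (v i).1, PadicInt.toZMod (v i).2) = c • w) :
    ∃ S : Finset (Fin (3 * p - 2)), S.Nonempty ∧ S.card ≤ p ∧
      (p : ℤ_[p]) ∣ (∑ i ∈ S, (v i).1) ∧ (p : ℤ_[p]) ∣ (∑ i ∈ S, (v i).2) ∧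
      ¬ (((p : ℤ_[p]) ^ 2 ∣ (∑ i ∈ S, (v i).1)) ∧ ((p : ℤ_[p]) ^ 2 ∣ (∑ i ∈ S, (v i).2))) := by
  obtain ⟨w, hw0, hc⟩ := hclass
  choose c hc0 hcw using hc
  have h1 : ∀ i, PadicInt.toZMod (v i).1 = c i * w.1 := by
    intro i
    have := congrArg Prod.fst (hcw i)
    simpa [smul_eq_mul] using this
  have h2 : ∀ i, PadicInt.toZMod (v i).2 = c i * w.2 := by
    intro i
    have := congrArg Prod.snd (hcw i)
    simpa [smul_eq_mul] using this
  have hw : w.1 ≠ 0 ∨ w.2 ≠ 0 := by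
    by_contra h
    push_neg at h
    exact hw0 (Prod.ext h.1 h.2)
  rcases hw with hw1 | hw2
  · have hx : ∀ i, PadicInt.toZMod ((v i).1) ≠ 0 := by
      intro i
      rw [h1 i]
      exact mul_ne_zero (hc0 i) hw1
    have hr : ∀ i, PadicInt.toZMod ((v i).2)
        = (w.2 * w.1⁻¹) * PadicInt.toZMod ((v i).1) := by
      intro i
      rw [h1 i, h2 i]
      field_simp
    obtain ⟨S, hS1, hS2, hS3, hS4, hS5⟩ :=
      padic_helper rfl (fun i => (v i).1) (fun i => (v i).2) hx _ hr
    exact ⟨S, hS1, hS2, hS3, hS4, fun hcon => hS5 hcon.1⟩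
  · have hx : ∀ i, PadicInt.toZMod ((v i).2) ≠ 0 := by
      intro i
      rw [h2 i]
      exact mul_ne_zero (hc0 i) hw2
    have hr : ∀ i, PadicInt.toZMod ((v i).1)
        = (w.1 * w.2⁻¹) * PadicInt.toZMod ((v i).2) := by
      intro i
      rw [h1 i, h2 i]
      field_simp
    obtain ⟨S, hS1, hS2, hS3, hS4, hS5⟩ :=
      padic_helper rfl (fun i => (v i).2) (fun i => (v i).1) hx _ hr
    exact ⟨S, hS1, hS2, hS4, hS3, fun hcon => hS5 hcon.2⟩
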